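/- The transformation (top) in Simple is correct: for all Simple expressions e1, e2, if e1 →top e2 then e1 ∼c e2 (e1 and e2 are contextually equivalent). -/

import Mathlib

/-- Expressions of the calculus `Simple`: `e ::= ⊥ | ⊤ | ¬e | e ∧ e`. -/
inductive SExp : Type where
  | bot : SExp
  | top : SExp
  | neg : SExp → SExp
  | and : SExp → SExp → SExp

/-- Evaluation contexts: `A ::= [·] | ¬A | A ∧ e`. -/
inductive ECtx : Type where
  | hole : ECtx
  | neg : ECtx → ECtx
  | and : ECtx → SExp → ECtx

/-- Hole filling for evaluation contexts. -/
def ECtx.fill : ECtx → SExp → SExp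
  | .hole, e => e
  | .neg A, e => .neg (A.fill e)
  | .and A t, e => .and (A.fill e) t

/-- General contexts: `C ::= [·] | ¬C | C ∧ e | e ∧ C`. -/
inductive GCtx : Type where
  | hole : GCtx
  | neg : GCtx → GCtx
  | andL : GCtx → SExp → GCtx
  | andR : SExp → GCtx → GCtx

/-- Hole filling for general contexts. -/
def GCtx.fill : GCtx → SExp → SExp
  | .hole, e => e
  | .neg C, e => .neg (C.fill e)
  | .andL C t, e => .and (C.fill e) t
  | .andR t C, e => .and t (C.fill e)

/-- Labels of the standard-reduction rules. -/
inductive SRLab : Type where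
  | bot | top | neg1 | neg2

/-- The labelled standard reduction rules of `Simple`. -/
inductive SRL : SRLab → SExp → SExp → Prop where
  | bot (A : ECtx) (e : SExp) : SRL .bot (A.fill (.and .bot e)) (A.fill .bot)
  | top (A : ECtx) (e : SExp) : SRL .top (A.fill (.and .top e)) (A.fill e)
  | neg1 (A : ECtx) : SRL .neg1 (A.fill (.neg .top)) (A.fill .bot)
  | neg2 (A : ECtx) : SRL .neg2 (A.fill (.neg .bot)) (A.fill .top)

/-- The standard reduction `→sr` (union of the four rules). -/
def SR (e e' : SExp) : Prop := ∃ a, SRL a e e'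

/-- The transformation `(top)`: `C[⊤ ∧ e] →top C[e]` for all general contexts `C`. -/
inductive TopT : SExp → SExp → Prop where
  | mk (C : GCtx) (e : SExp) : TopT (C.fill (.and .top e)) (C.fill e)

/-- Convergence: `e ↓` iff `e →sr* ⊤`. -/
def SConv (e : SExp) : Prop := Relation.ReflTransGen SR e .top

/-- Boolean evaluation of expressions. -/
def seval : SExp → Bool
  | .bot => false
  | .top => true
  | .neg e => !(seval e)
  | .and e1 e2 => seval e1 && seval e2

/-- Composition of evaluation contexts. -/
def ECtx.comp : ECtx → ECtx → ECtx
  | .hole, B => B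
  | .neg A, B => .neg (A.comp B)
  | .and A t, B => .and (A.comp B) t

lemma ECtx.fill_comp (A B : ECtx) (e : SExp) :
    (A.comp B).fill e = A.fill (B.fill e) := by
  induction A with
  | hole => rfl
  | neg A ih => simp [ECtx.comp, ECtx.fill, ih]
  | and A t ih => simp [ECtx.comp, ECtx.fill, ih]

lemma SRL.ctx {a e e'} (A : ECtx) (h : SRL a e e') :
    SRL a (A.fill e) (A.fill e') := by
  cases h with
  | bot B t => rw [← ECtx.fill_comp, ← ECtx.fill_comp]; exact .bot _ _
  | top B t => rw [← ECtx.fill_comp, ← ECtx.fill_comp]; exact .top _ _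
  | neg1 B => rw [← ECtx.fill_comp, ← ECtx.fill_comp]; exact .neg1 _
  | neg2 B => rw [← ECtx.fill_comp, ← ECtx.fill_comp]; exact .neg2 _

lemma SR.ctx {e e'} (A : ECtx) (h : SR e e') : SR (A.fill e) (A.fill e') := by
  obtain ⟨a, h⟩ := h; exact ⟨a, h.ctx A⟩

lemma SRstar.ctx {e e'} (A : ECtx) (h : Relation.ReflTransGen SR e e') :
    Relation.ReflTransGen SR (A.fill e) (A.fill e') := by
  induction h with
  | refl => exact .refl
  | tail _ h ih => exact ih.tail (h.ctx A)

lemma seval_fill (A : ECtx) {e e'} (h : seval e = seval e') :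
    seval (A.fill e) = seval (A.fill e') := by
  induction A with
  | hole => exact h
  | neg A ih => simp [ECtx.fill, seval, ih]
  | and A t ih => simp [ECtx.fill, seval, ih]

lemma seval_SR {e e'} (h : SR e e') : seval e = seval e' := by
  obtain ⟨a, h⟩ := h
  cases h with
  | bot A t => exact seval_fill A (by simp [seval])
  | top A t => exact seval_fill A (by simp [seval])
  | neg1 A => exact seval_fill A (by simp [seval])
  | neg2 A => exact seval_fill A (by simp [seval])

lemma snormalize (e : SExp) :
    Relation.ReflTransGen SR e (if seval e then SExp.top else SExp.bot) := by
  induction e with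
  | bot => simp only [seval, if_neg Bool.false_ne_true]; exact .refl
  | top => simp only [seval, if_pos rfl]; exact .refl
  | neg e ih =>
      have h1 := SRstar.ctx (ECtx.neg ECtx.hole) ih
      simp only [ECtx.fill] at h1
      cases hv : seval e <;> simp [hv, seval] at h1 ⊢
      · exact h1.tail ⟨.neg2, SRL.neg2 ECtx.hole⟩
      · exact h1.tail ⟨.neg1, SRL.neg1 ECtx.hole⟩
  | and e1 e2 ih1 ih2 =>
      have h1 := SRstar.ctx (ECtx.and ECtx.hole e2) ih1
      simp only [ECtx.fill] at h1
      cases hv : seval e1 <;> simp [hv, seval] at h1 ⊢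
      · exact h1.tail ⟨.bot, SRL.bot ECtx.hole e2⟩
      · exact (h1.tail ⟨.top, SRL.top ECtx.hole e2⟩).trans ih2

lemma sconv_iff (e : SExp) : SConv e ↔ seval e = true := by
  constructor
  · intro h
    have key : ∀ a b : SExp, Relation.ReflTransGen SR a b → seval a = seval b := by
      intro a b hab
      induction hab with
      | refl => rfl
      | tail _ h ih => rw [ih, seval_SR h]
    simpa [seval] using key _ _ h
  · intro h
    have := snormalize e
    rw [h] at this
    simpa [SConv] using this

lemma seval_gfill (C : GCtx) {e e'} (h : seval e = seval e') :
    seval (C.fill e) = seval (C.fill e') := by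
  induction C with
  | hole => exact h
  | neg C ih => simp [GCtx.fill, seval, ih]
  | andL C t ih => simp [GCtx.fill, seval, ih]
  | andR t C ih => simp [GCtx.fill, seval, ih]

/-- correctness of `(top)`: `e1 →top e2` implies `e1 ∼c e2`. -/
theorem simple_top_correct :
    ∀ e1 e2 : SExp, TopT e1 e2 →
      ∀ C : GCtx, SConv (C.fill e1) ↔ SConv (C.fill e2) := by
  intro e1 e2 h C
  cases h with
  | mk D e =>
    rw [sconv_iff, sconv_iff]
    have : seval (D.fill (SExp.and SExp.top e)) = seval (D.fill e) :=
      seval_gfill D (by simp [seval])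
    rw [seval_gfill C this]
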